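/- Let 𝓡 be a reaction network on 2 species containing the reactions y*_1 → y*_2, …, y*_{M−1} → y*_M, y*_M → y*_1, with complex set C (sources and products of 𝓡). Assume: (1) {y*_1,…,y*_M} can be enumerated as ȳ_1 < ȳ_2 < … < ȳ_M in the componentwise strict order; (2) there exists i_1 ∈ {1,2} such that (ȳ_m)_{i_1} < (ȳ_{m'})_{i_1} − (ȳ_1)_{i_1} for all 1 ≤ m < m' ≤ M; (3) for each m ∈ {1,…,M}, the only reaction of 𝓡 with source complex y*_m is y*_m → y*_{m+1} (with y*_{M+1} = y*_1); (4) letting i_2 ∈ {1,2} with i_2 ≠ i_1 and letting f : ℤ_{≥0} → ℤ_{≥0} be defined by f(ℓ) = 0 for ℓ < (ȳ_1)_{i_1}, f(ℓ) = (ȳ_m)_{i_2} for (ȳ_m)_{i_1} ≤ ℓ < (ȳ_{m+1})_{i_1} (1 ≤ m ≤ M−1), and f(ℓ) = (ȳ_M)_{i_2} for ℓ ≥ (ȳ_M)_{i_1}, every complex y ∈ C \ {ȳ_1,…,ȳ_M} satisfies f((y)_{i_1} + (ȳ_1)_{i_1}) < (y)_{i_2}. Then the sequence {x_n}_{n≥1}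 defined by (x_n)_{i_1} = n + (y*_1)_{i_1} and (x_n)_{i_2} = (y*_1)_{i_2} is a tier sequence of 𝓡, and R = (y*_1 → y*_2, …, y*_M → y*_1) is a strong tier-1 cycle along {x_n}. -/

import Mathlib

open Filter Finset

/-- A reaction network on `d` species: every reaction has a nonnegative source complex and
a nonnegative product complex, and the source differs from the product. -/
def IsRN (d : ℕ) (Rn : Finset ((Fin d → ℤ) × (Fin d → ℤ))) : Prop :=
  ∀ r ∈ Rn, (∀ i, 0 ≤ r.1 i) ∧ (∀ i, 0 ≤ r.2 i) ∧ r.1 ≠ r.2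

/-- Mass-action intensity `λ_y(x) = ∏ i, x_i!/(x_i - y_i)!` if `x ≥ y` componentwise, else `0`. -/
def intensity (d : ℕ) (y x : Fin d → ℤ) : ℕ :=
  if ∀ i, y i ≤ x i then ∏ i : Fin d, Nat.descFactorial (x i).toNat ((y i).toNat) else 0

/-- Cyclic successor on `{1, …, M}`: `cyc M m = m + 1` for `m < M` and `cyc M M = 1`. -/
def cyc (M m : ℕ) : ℕ := if m = M then 1 else m + 1

/-- `xshift d ystar x m n = x^m_n = x_n + ∑_{j=1}^{m-1} (y*_{j+1} - y*_j)`. -/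
def xshift (d : ℕ) (ystar : ℕ → Fin d → ℤ) (x : ℕ → Fin d → ℤ) (m n : ℕ) : Fin d → ℤ :=
  fun i => x n i + ∑ j ∈ Finset.Ico 1 m, (ystar (j + 1) i - ystar j i)

/-- The ordered list `(y*_1 → y*_2, …, y*_M → y*_1)` consists of reactions of the network. -/
def IsCycleIn (d : ℕ) (Rn : Finset ((Fin d → ℤ) × (Fin d → ℤ))) (M : ℕ)
    (ystar : ℕ → Fin d → ℤ) : Prop :=
  ∀ m, 1 ≤ m → m ≤ M → (ystar m, ystar (cyc M m)) ∈ Rn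

/-- Condition (ii) of a strong tier-1 cycle, with explicit witness `m0`. -/
def TierLimits (d : ℕ) (Rn : Finset ((Fin d → ℤ) × (Fin d → ℤ))) (M : ℕ)
    (ystar : ℕ → Fin d → ℤ) (x : ℕ → Fin d → ℤ) (m0 : ℕ) : Prop :=
  ∀ m, 1 ≤ m → m ≤ M → ∀ y y' : Fin d → ℤ, (y, y') ∈ Rn →
    (y, y') ≠ (ystar m, ystar (cyc M m)) →
    Tendsto (fun n =>
        ((intensity d (ystar m0) (xshift d ystar x m0 n) : ℝ) *
          (intensity d y (xshift d ystar x m n) : ℝ)) /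
          (intensity d (ystar m) (xshift d ystar x m n) : ℝ))
      atTop (nhds 0)

/-- `R = (y*_1 → y*_2, …, y*_M → y*_1)` is a strong tier-1 cycle along `x`. -/
def IsStrongT1Cycle (d : ℕ) (Rn : Finset ((Fin d → ℤ) × (Fin d → ℤ))) (M : ℕ)
    (ystar : ℕ → Fin d → ℤ) (x : ℕ → Fin d → ℤ) : Prop :=
  IsCycleIn d Rn M ystar ∧
  (∀ n, 0 < intensity d (ystar 1) (x n)) ∧
  ∃ m0, 1 ≤ m0 ∧ m0 ≤ M ∧ TierLimits d Rn M ystar x m0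

/-- `y` is a source complex of the network. -/
def IsSourceIn (d : ℕ) (Rn : Finset ((Fin d → ℤ) × (Fin d → ℤ))) (y : Fin d → ℤ) : Prop :=
  ∃ y', (y, y') ∈ Rn

/-- `y` is a complex (source or product) of the network. -/
def ComplexOf (d : ℕ) (Rn : Finset ((Fin d → ℤ) × (Fin d → ℤ))) (y : Fin d → ℤ) : Prop :=
  ∃ r ∈ Rn, r.1 = y ∨ r.2 = y

/-- Tier sequence of a reaction network. -/
def IsTierSeq (d : ℕ) (Rn : Finset ((Fin d → ℤ) × (Fin d → ℤ)))
    (x : ℕ → Fin d → ℤ) : Prop :=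
  (∀ n i, 0 ≤ x n i) ∧
  (∃ i, Tendsto (fun n => x n i) atTop atTop) ∧
  (∀ i, (Tendsto (fun n => x n i) atTop atTop ∧ Monotone fun n => x n i) ∨
      (∃ c : ℤ, ∀ n, x n i = c)) ∧
  (∀ y y' : Fin d → ℤ, IsSourceIn d Rn y → IsSourceIn d Rn y' →
    (Tendsto (fun n => (intensity d y (x n) : ℝ) / (intensity d y' (x n) : ℝ)) atTop atTop ∨
      ∃ c : ℝ, Tendsto (fun n => (intensity d y (x n) : ℝ) / (intensity d y' (x n) : ℝ))
        atTop (nhds c)))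

/-- One reaction step: some reaction `y → y'` with `y ≤ a` fires, giving `b = a + y' - y`. -/
def ReactStep (d : ℕ) (Rn : Finset ((Fin d → ℤ) × (Fin d → ℤ)))
    (a b : Fin d → ℤ) : Prop :=
  ∃ r ∈ Rn, (∀ i, r.1 i ≤ a i) ∧ b = fun i => a i + (r.2 i - r.1 i)

/-- `w` is reachable from `z` by finitely many reaction steps. -/
def Reachable (d : ℕ) (Rn : Finset ((Fin d → ℤ) × (Fin d → ℤ)))
    (z w : Fin d → ℤ) : Prop :=
  Relation.ReflTransGen (ReactStep d Rn) z w

/-- Weak reversibility: every reaction lies on a directed cycle of reactions. -/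
def WeaklyReversible (d : ℕ) (Rn : Finset ((Fin d → ℤ) × (Fin d → ℤ))) : Prop :=
  ∀ r ∈ Rn, ∃ (K : ℕ) (ys : ℕ → Fin d → ℤ), 2 ≤ K ∧
    ys 1 = r.1 ∧ ys 2 = r.2 ∧
    (∀ j, 1 ≤ j → j < K → (ys j, ys (j + 1)) ∈ Rn) ∧
    (ys K, ys 1) ∈ Rn



lemma descF_pos {n k : ℕ} (h : k ≤ n) : 0 < n.descFactorial k :=
  Nat.pos_of_ne_zero (fun h0 => absurd (Nat.descFactorial_eq_zero_iff_lt.mp h0) (not_lt.mpr h))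

lemma descF_split (N q r : ℕ) :
    Nat.descFactorial N (q + r) = Nat.descFactorial N q * Nat.descFactorial (N - q) r := by
  rw [Nat.descFactorial_eq_prod_range, Nat.descFactorial_eq_prod_range,
    Nat.descFactorial_eq_prod_range, Finset.prod_range_add]
  congr 1
  refine Finset.prod_congr rfl fun i _ => ?_
  omega

lemma descF_div_pow (K p : ℕ) :
    Tendsto (fun n : ℕ => (Nat.descFactorial (n + K) p : ℝ) / (n : ℝ) ^ p) atTop (nhds 1) := by
  induction p with
  | zero => simp
  | succ p ih =>
    have h1 : Tendsto (fun n : ℕ => ((n : ℝ) + ((K : ℝ) - p)) / n) atTop (nhds 1) := by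
      have h2 : Tendsto (fun n : ℕ => 1 + ((K : ℝ) - p) / n) atTop (nhds 1) := by
        have := (tendsto_const_div_atTop_nhds_zero_nat ((K : ℝ) - p)).const_add 1
        simpa using this
      refine h2.congr' ?_
      filter_upwards [eventually_ge_atTop 1] with n hn
      have hn' : (n : ℝ) ≠ 0 := Nat.cast_ne_zero.mpr (by omega)
      field_simp
    have h3 := h1.mul ih
    rw [one_mul] at h3
    refine h3.congr' ?_
    filter_upwards [eventually_ge_atTop (p + 1)] with n hn
    have hn0 : (n : ℝ) ≠ 0 := Nat.cast_ne_zero.mpr (by omega)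
    rw [Nat.descFactorial_succ]
    have hcast : ((n + K - p : ℕ) : ℝ) = (n : ℝ) + ((K : ℝ) - p) := by
      have h4 : p ≤ n + K := by omega
      push_cast [Nat.cast_sub h4]
      ring
    push_cast
    rw [hcast, eq_comm, div_mul_div_comm]
    congr 1
    ring

lemma inv_pow_tendsto (r : ℕ) :
    Tendsto (fun n : ℕ => ((n : ℝ)⁻¹) ^ (r + 1)) atTop (nhds 0) := by
  have h := (tendsto_inv_atTop_zero.comp (tendsto_natCast_atTop_atTop (R := ℝ))).pow (r + 1)
  simpa using h

lemma ratio_lt (c c' : ℝ) (hc' : c' ≠ 0) {p q : ℕ} (h : p < q) (K K' : ℕ) :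
    Tendsto (fun n : ℕ => (c * (Nat.descFactorial (n + K) p : ℝ)) /
      (c' * (Nat.descFactorial (n + K') q : ℝ))) atTop (nhds 0) := by
  obtain ⟨r, rfl⟩ : ∃ r, q = p + (r + 1) := ⟨q - p - 1, by omega⟩
  have hu := descF_div_pow K p
  have hw := descF_div_pow K' (p + (r + 1))
  have hmain := ((hu.div hw one_ne_zero).const_mul (c / c')).mul (inv_pow_tendsto r)
  rw [mul_zero] at hmain
  refine hmain.congr' ?_
  filter_upwards [eventually_ge_atTop (p + (r + 1) + 1)] with n hn
  have hn0 : (n : ℝ) ≠ 0 := Nat.cast_ne_zero.mpr (by omega)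
  have hd : (Nat.descFactorial (n + K') (p + (r + 1)) : ℝ) ≠ 0 :=
    Nat.cast_ne_zero.mpr (descF_pos (by omega)).ne'
  simp only [Pi.div_apply, inv_pow]
  field_simp
  ring

lemma ratio_eq (c c' : ℝ) (hc' : c' ≠ 0) (p K K' : ℕ) :
    Tendsto (fun n : ℕ => (c * (Nat.descFactorial (n + K) p : ℝ)) /
      (c' * (Nat.descFactorial (n + K') p : ℝ))) atTop (nhds (c / c')) := by
  have hu := descF_div_pow K p
  have hw := descF_div_pow K' p
  have hmain := (hu.div hw one_ne_zero).const_mul (c / c')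
  rw [div_one, mul_one] at hmain
  refine hmain.congr' ?_
  filter_upwards [eventually_ge_atTop (p + 1)] with n hn
  have hn0 : (n : ℝ) ≠ 0 := Nat.cast_ne_zero.mpr (by omega)
  have hd : (Nat.descFactorial (n + K') p : ℝ) ≠ 0 :=
    Nat.cast_ne_zero.mpr (descF_pos (by omega)).ne'
  simp only [Pi.div_apply]
  field_simp

lemma ratio_gt (c c' : ℝ) (hc : 0 < c) (hc' : 0 < c') {p q : ℕ} (h : q < p) (K K' : ℕ) :
    Tendsto (fun n : ℕ => (c * (Nat.descFactorial (n + K) p : ℝ)) /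
      (c' * (Nat.descFactorial (n + K') q : ℝ))) atTop atTop := by
  obtain ⟨r, rfl⟩ : ∃ r, p = q + (r + 1) := ⟨p - q - 1, by omega⟩
  have hu := descF_div_pow K (q + (r + 1))
  have hw := descF_div_pow K' q
  have hfirst := (hu.div hw one_ne_zero).const_mul (c / c')
  rw [div_one, mul_one] at hfirst
  have hpow : Tendsto (fun n : ℕ => (n : ℝ) ^ (r + 1)) atTop atTop :=
    (tendsto_pow_atTop (by omega)).comp (tendsto_natCast_atTop_atTop (R := ℝ))
  have hmain := Filter.Tendsto.pos_mul_atTop (by positivity) hfirst hpow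
  refine hmain.congr' ?_
  filter_upwards [eventually_ge_atTop (q + (r + 1) + 1)] with n hn
  have hn0 : (n : ℝ) ≠ 0 := Nat.cast_ne_zero.mpr (by omega)
  have hd : (Nat.descFactorial (n + K') q : ℝ) ≠ 0 :=
    Nat.cast_ne_zero.mpr (descF_pos (by omega)).ne'
  simp only [Pi.div_apply]
  field_simp
  ring

lemma ratio_zero3 (c1 c2 cq : ℝ) (hcq : cq ≠ 0) {p1 p2 q : ℕ} (h : p1 + p2 < q)
    (K1 K2 Kq : ℕ) :
    Tendsto (fun n : ℕ =>
      ((c1 * (Nat.descFactorial (n + K1) p1 : ℝ)) * (c2 * (Nat.descFactorial (n + K2) p2 : ℝ))) /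
        (cq * (Nat.descFactorial (n + Kq) q : ℝ))) atTop (nhds 0) := by
  obtain ⟨r, rfl⟩ : ∃ r, q = p1 + p2 + (r + 1) := ⟨q - p1 - p2 - 1, by omega⟩
  have hu := descF_div_pow K1 p1
  have hv := descF_div_pow K2 p2
  have hw := descF_div_pow Kq (p1 + p2 + (r + 1))
  have hmain := ((((hu.mul hv).div hw one_ne_zero).const_mul (c1 * c2 / cq)).mul
    (inv_pow_tendsto r))
  rw [mul_zero] at hmain
  refine hmain.congr' ?_
  filter_upwards [eventually_ge_atTop (p1 + p2 + (r + 1) + 1)] with n hn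
  have hn0 : (n : ℝ) ≠ 0 := Nat.cast_ne_zero.mpr (by omega)
  have hd : (Nat.descFactorial (n + Kq) (p1 + p2 + (r + 1)) : ℝ) ≠ 0 :=
    Nat.cast_ne_zero.mpr (descF_pos (by omega)).ne'
  simp only [Pi.div_apply, inv_pow]
  field_simp
  ring

lemma fin2_forall {i1 i2 : Fin 2} (h : i2 ≠ i1) (P : Fin 2 → Prop) :
    (∀ i, P i) ↔ P i1 ∧ P i2 := by
  constructor
  · exact fun hp => ⟨hp i1, hp i2⟩
  · rintro ⟨h1, h2⟩ i
    fin_cases i1 <;> fin_cases i2 <;> fin_cases i <;> simp_all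

lemma fin2_prod {i1 i2 : Fin 2} (h : i2 ≠ i1) (g : Fin 2 → ℕ) :
    ∏ i, g i = g i1 * g i2 := by
  fin_cases i1 <;> fin_cases i2 <;> simp_all [Fin.prod_univ_two, mul_comm]

lemma intensity_eval {i1 i2 : Fin 2} (h : i2 ≠ i1) (y z : Fin 2 → ℤ) :
    intensity 2 y z = if y i1 ≤ z i1 ∧ y i2 ≤ z i2 then
      Nat.descFactorial (z i1).toNat (y i1).toNat *
        Nat.descFactorial (z i2).toNat (y i2).toNat else 0 := by
  rw [intensity]
  by_cases hc : y i1 ≤ z i1 ∧ y i2 ≤ z i2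
  · rw [if_pos ((fin2_forall h (fun i => y i ≤ z i)).mpr hc), if_pos hc, fin2_prod h]
  · rw [if_neg (fun hall => hc ((fin2_forall h (fun i => y i ≤ z i)).mp hall)), if_neg hc]

/-- Value of intensity along the shifted sequence, in the generic (eventually valid) case. -/
lemma intensity_seq {i1 i2 : Fin 2} (h : i2 ≠ i1) (y w : Fin 2 → ℤ)
    (hy1 : 0 ≤ y i1) (hw1 : 0 ≤ w i1) (hy2 : y i2 ≤ w i2) (n : ℕ) (hn : (y i1).toNat ≤ n) :
    intensity 2 y (fun i => if i = i1 then ((n : ℤ) + 1) + w i else w i)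
      = Nat.descFactorial (n + 1 + (w i1).toNat) ((y i1).toNat) *
        Nat.descFactorial ((w i2).toNat) ((y i2).toNat) := by
  rw [intensity_eval h]
  simp only [eq_self_iff_true, if_true, if_neg h]
  rw [if_pos]
  · congr 1
    have : ((n : ℤ) + 1 + w i1).toNat = n + 1 + (w i1).toNat := by omega
    rw [this]
  · constructor
    · omega
    · exact hy2

lemma intensity_seq_zero {i1 i2 : Fin 2} (h : i2 ≠ i1) (y w : Fin 2 → ℤ)
    (hy2 : w i2 < y i2) (n : ℕ) :
    intensity 2 y (fun i => if i = i1 then ((n : ℤ) + 1) + w i else w i) = 0 := by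
  rw [intensity_eval h]
  simp only [eq_self_iff_true, if_true, if_neg h]
  rw [if_neg]
  rintro ⟨-, h2⟩
  omega

lemma intensity_seq_self {i1 i2 : Fin 2} (h : i2 ≠ i1) (w : Fin 2 → ℤ)
    (hw1 : 0 ≤ w i1) (n : ℕ) :
    intensity 2 w (fun i => if i = i1 then ((n : ℤ) + 1) + w i else w i)
      = Nat.descFactorial (n + 1 + (w i1).toNat) ((w i1).toNat) *
        Nat.descFactorial ((w i2).toNat) ((w i2).toNat) := by
  rw [intensity_eval h]
  simp only [eq_self_iff_true, if_true, if_neg h]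
  rw [if_pos ⟨by omega, le_refl _⟩]
  congr 1
  have : ((n : ℤ) + 1 + w i1).toNat = n + 1 + (w i1).toNat := by omega
  rw [this]

/-- Corollary 3 (structural part): a two-species network containing the cycle, with the gap
condition and condition on the extra complexes via `f`, gives a tier sequence along which
`R` is a strong tier-1 cycle. -/
theorem stmt8 {M : ℕ} (hM : 1 ≤ M)
    (Rn : Finset ((Fin 2 → ℤ) × (Fin 2 → ℤ))) (hRn : IsRN 2 Rn)
    (ystar ybar : ℕ → Fin 2 → ℤ) (hmem : IsCycleIn 2 Rn M ystar)
    (hset : ∀ y : Fin 2 → ℤ,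
      (∃ m, 1 ≤ m ∧ m ≤ M ∧ ystar m = y) ↔ (∃ k, 1 ≤ k ∧ k ≤ M ∧ ybar k = y))
    (hord : ∀ m, 1 ≤ m → m < M → ∀ i, ybar m i < ybar (m + 1) i)
    (i1 i2 : Fin 2) (hne : i2 ≠ i1)
    (hgap : ∀ m m', 1 ≤ m → m < m' → m' ≤ M → ybar m i1 < ybar m' i1 - ybar 1 i1)
    (honly : ∀ m, 1 ≤ m → m ≤ M → ∀ y' : Fin 2 → ℤ, (ystar m, y') ∈ Rn →
      y' = ystar (cyc M m))
    (f : ℤ → ℤ)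
    (hf0 : ∀ ℓ, 0 ≤ ℓ → ℓ < ybar 1 i1 → f ℓ = 0)
    (hfm : ∀ m, 1 ≤ m → m ≤ M - 1 → ∀ ℓ, ybar m i1 ≤ ℓ → ℓ < ybar (m + 1) i1 →
      f ℓ = ybar m i2)
    (hfM : ∀ ℓ, ybar M i1 ≤ ℓ → f ℓ = ybar M i2)
    (hcomp : ∀ y : Fin 2 → ℤ, ComplexOf 2 Rn y → (∀ k, 1 ≤ k → k ≤ M → y ≠ ybar k) →
      f (y i1 + ybar 1 i1) < y i2) :
    IsTierSeq 2 Rn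
      (fun n i => if i = i1 then ((n : ℤ) + 1) + ystar 1 i else ystar 1 i) ∧
    IsStrongT1Cycle 2 Rn M ystar
      (fun n i => if i = i1 then ((n : ℤ) + 1) + ystar 1 i else ystar 1 i) := by

  -- notation
  have h1nn : ∀ i, 0 ≤ ystar 1 i := (hRn _ (hmem 1 le_rfl hM)).1
  have hsrc : ∀ m, 1 ≤ m → m ≤ M → ∀ i, 0 ≤ ystar m i :=
    fun m hm1 hm2 i => (hRn _ (hmem m hm1 hm2)).1 i
  have hybar_ex : ∀ k, 1 ≤ k → k ≤ M → ∃ m, 1 ≤ m ∧ m ≤ M ∧ ystar m = ybar k :=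
    fun k h1 h2 => (hset (ybar k)).mpr ⟨k, h1, h2, rfl⟩
  have hybar_nonneg : ∀ k, 1 ≤ k → k ≤ M → ∀ i, 0 ≤ ybar k i := by
    intro k h1 h2 i
    obtain ⟨m, hm1, hm2, hm3⟩ := hybar_ex k h1 h2
    rw [← hm3]; exact hsrc m hm1 hm2 i
  -- strict monotonicity of ybar
  have hmono : ∀ k k', 1 ≤ k → k < k' → k' ≤ M → ∀ i, ybar k i < ybar k' i := by
    intro k k'
    induction k' with
    | zero => omega
    | succ j IH =>
      intro h1 h2 h3 i
      rcases Nat.lt_or_ge k j with hlt | hge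
      · exact lt_trans (IH h1 hlt (by omega) i) (hord j (by omega) (by omega) i)
      · have : k = j := by omega
        subst this
        exact hord k h1 (by omega) i
  -- f dominates ybar values to the left
  have hfge : ∀ t k', 1 ≤ k' → k' ≤ M → M - k' ≤ t → ∀ ℓ, ybar k' i1 ≤ ℓ →
      ybar k' i2 ≤ f ℓ := by
    intro t
    induction t with
    | zero =>
      intro k' h1 h2 h3 ℓ hl
      have hk : k' = M := by omega
      subst hk
      rw [hfM ℓ hl]
    | succ t IH =>
      intro k' h1 h2 h3 ℓ hl
      by_cases hk : k' = M
      · subst hk; rw [hfM ℓ hl]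
      · by_cases hc : ℓ < ybar (k' + 1) i1
        · rw [hfm k' h1 (by omega) ℓ hl hc]
        · have h5 := IH (k' + 1) (by omega) (by omega) (by omega) ℓ (by omega)
          have h6 := hmono k' (k' + 1) h1 (by omega) (by omega) i2
          omega
  -- the key disjunction
  have hkey : ∀ m, 1 ≤ m → m ≤ M → ∀ y : Fin 2 → ℤ, IsSourceIn 2 Rn y → y ≠ ystar m →
      ystar m i2 < y i2 ∨ y i1 + ybar 1 i1 < ystar m i1 := by
    intro m h1 h2 y hy hney
    obtain ⟨k', hk1, hk2, hk'⟩ := (hset (ystar m)).mp ⟨m, h1, h2, rfl⟩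
    by_cases hyb : ∃ k, 1 ≤ k ∧ k ≤ M ∧ y = ybar k
    · obtain ⟨k, hkk1, hkk2, rfl⟩ := hyb
      rcases lt_trichotomy k k' with hlt | heq | hgt
      · right
        have := hgap k k' hkk1 hlt hk2
        rw [hk'] at this
        omega
      · exfalso; subst heq; exact hney hk'
      · left
        have := hmono k' k hk1 hgt hkk2 i2
        rw [hk'] at this
        exact this
    · push_neg at hyb
      obtain ⟨y', hy'⟩ := hy
      have hcomp' := hcomp y ⟨(y, y'), hy', Or.inl rfl⟩ (fun k a b => hyb k a b)
      by_contra hcon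
      push_neg at hcon
      obtain ⟨hcon1, hcon2⟩ := hcon
      have h7 : ybar k' i1 ≤ y i1 + ybar 1 i1 := by rw [hk']; exact hcon2
      have h8 := hfge (M - k') k' hk1 hk2 le_rfl (y i1 + ybar 1 i1) h7
      rw [hk'] at h8
      omega
  obtain ⟨m0, hm01, hm0M, hm0eq⟩ := hybar_ex 1 le_rfl hM
  -- the sequence x and the shifted sequences
  have hxshift : ∀ m, 1 ≤ m → ∀ n, xshift 2 ystar
      (fun n i => if i = i1 then ((n : ℤ) + 1) + ystar 1 i else ystar 1 i) m n =
      fun i => if i = i1 then ((n : ℤ) + 1) + ystar m i else ystar m i := by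
    intro m hm1 n
    funext i
    have htel : ∀ m', 1 ≤ m' → ∑ j ∈ Finset.Ico 1 m', (ystar (j + 1) i - ystar j i) =
        ystar m' i - ystar 1 i := by
      intro m'
      induction m' with
      | zero => omega
      | succ j IH =>
        intro h1
        rcases Nat.lt_or_ge j 1 with hj | hj
        · have : j = 0 := by omega
          subst this
          simp
        · rw [Finset.sum_Ico_succ_top hj, IH hj]
          ring
    rw [xshift, htel m hm1]
    by_cases hi : i = i1 <;> simp [hi] <;> ring
  -- positivity of intensities at self
  have hposself : ∀ m, 1 ≤ m → m ≤ M → ∀ n : ℕ, 0 < intensity 2 (ystar m)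
      (fun i => if i = i1 then ((n : ℤ) + 1) + ystar m i else ystar m i) := by
    intro m hm1 hm2 n
    rw [intensity_seq_self hne (ystar m) (hsrc m hm1 hm2 i1) n]
    exact Nat.mul_pos (descF_pos (by omega)) (descF_pos le_rfl)
  constructor
  · -- IsTierSeq
    refine ⟨?_, ?_, ?_, ?_⟩
    · intro n i
      have h10 := h1nn i
      have h11 := h1nn i1
      by_cases hi : i = i1 <;> simp [hi] <;> omega
    · refine ⟨i1, ?_⟩
      simp only [eq_self_iff_true, if_true]
      have h9 := tendsto_atTop_add_const_right atTop ((1 : ℤ) + ystar 1 i1)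
        (tendsto_natCast_atTop_atTop (R := ℤ))
      exact h9.congr (fun n => by ring)
    · intro i
      by_cases hi : i = i1
      · left
        subst hi
        simp only [eq_self_iff_true, if_true]
        constructor
        · have h9 := tendsto_atTop_add_const_right atTop ((1 : ℤ) + ystar 1 i)
            (tendsto_natCast_atTop_atTop (R := ℤ))
          exact h9.congr (fun n => by ring)
        · intro a b hab
          simp only
          have : (a : ℤ) ≤ b := Int.ofNat_le.mpr hab
          omega
      · right
        exact ⟨ystar 1 i, fun n => by simp [hi]⟩
    · -- ratios of intensities
      intro y y' hy hy'
      obtain ⟨w1, hw1⟩ := hy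
      obtain ⟨w2, hw2⟩ := hy'
      have hy0 : ∀ i, 0 ≤ y i := (hRn _ hw1).1
      have hy0' : ∀ i, 0 ≤ y' i := (hRn _ hw2).1
      by_cases hz' : ystar 1 i2 < y' i2
      · right
        refine ⟨0, tendsto_const_nhds.congr (fun n => ?_)⟩
        rw [intensity_seq_zero hne y' (ystar 1) hz' n]
        simp
      · push_neg at hz'
        set c' : ℕ := Nat.descFactorial ((ystar 1 i2).toNat) ((y' i2).toNat) with hc'def
        have hc' : 0 < c' := descF_pos (by omega)
        by_cases hz : ystar 1 i2 < y i2
        · right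
          refine ⟨0, tendsto_const_nhds.congr (fun n => ?_)⟩
          rw [intensity_seq_zero hne y (ystar 1) hz n]
          simp
        · push_neg at hz
          set c : ℕ := Nat.descFactorial ((ystar 1 i2).toNat) ((y i2).toNat) with hcdef
          have hc : 0 < c := descF_pos (by omega)
          set p : ℕ := (y i1).toNat with hpdef
          set q : ℕ := (y' i1).toNat with hqdef
          set K : ℕ := 1 + (ystar 1 i1).toNat with hKdef
          have hev : ∀ᶠ n : ℕ in atTop, ((intensity 2 y
              (fun i => if i = i1 then ((n : ℤ) + 1) + ystar 1 i else ystar 1 i) : ℝ) /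
              (intensity 2 y'
              (fun i => if i = i1 then ((n : ℤ) + 1) + ystar 1 i else ystar 1 i) : ℝ)) =
              ((c : ℝ) * (Nat.descFactorial (n + K) p : ℝ)) /
              ((c' : ℝ) * (Nat.descFactorial (n + K) q : ℝ)) := by
            filter_upwards [eventually_ge_atTop p, eventually_ge_atTop q] with n hn1 hn2
            rw [intensity_seq hne y (ystar 1) (hy0 i1) (h1nn i1) hz n hn1,
              intensity_seq hne y' (ystar 1) (hy0' i1) (h1nn i1) hz' n hn2]
            have hKe : n + 1 + (ystar 1 i1).toNat = n + K := by omega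
            rw [hKe]
            push_cast
            ring
          rcases lt_trichotomy p q with hpq | hpq | hpq
          · right
            refine ⟨0, Tendsto.congr' (hev.mono fun _ h => h.symm) ?_⟩
            exact ratio_lt (c : ℝ) (c' : ℝ) (by positivity) hpq K K
          · right
            refine ⟨(c : ℝ) / (c' : ℝ), Tendsto.congr' (hev.mono fun _ h => h.symm) ?_⟩
            rw [hpq]
            exact ratio_eq (c : ℝ) (c' : ℝ) (by positivity) q K K
          · left
            refine Tendsto.congr' (hev.mono fun _ h => h.symm) ?_
            exact ratio_gt (c : ℝ) (c' : ℝ) (by positivity) (by positivity) hpq K K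
  · -- IsStrongT1Cycle
    refine ⟨hmem, fun n => hposself 1 le_rfl hM n, m0, hm01, hm0M, ?_⟩
    intro m h1 h2 y y' hyy' hne2
    simp only [hxshift m0 hm01, hxshift m h1]
    have hy0 : ∀ i, 0 ≤ y i := (hRn _ hyy').1
    by_cases hz : ystar m i2 < y i2
    · refine tendsto_const_nhds.congr (fun n => ?_)
      rw [intensity_seq_zero hne y (ystar m) hz n]
      simp
    · push_neg at hz
      have hyne : y ≠ ystar m := by
        intro heq
        apply hne2
        rw [heq, honly m h1 h2 y' (heq ▸ hyy')]
      have hdisj := hkey m h1 h2 y ⟨y', hyy'⟩ hyne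
      have hright : y i1 + ybar 1 i1 < ystar m i1 := by
        rcases hdisj with hl | hr
        · omega
        · exact hr
      -- numeric data
      have hb1 : 0 ≤ ybar 1 i1 := hybar_nonneg 1 le_rfl hM i1
      have hm0i1 : ystar m0 i1 = ybar 1 i1 := by rw [hm0eq]
      set A0 : ℕ := (ystar m0 i1).toNat with hA0def
      set p2 : ℕ := (y i1).toNat with hp2def
      set Q : ℕ := (ystar m i1).toNat with hQdef
      have hlt : A0 + p2 < Q := by
        have := hy0 i1
        omega
      set c1 : ℕ := Nat.descFactorial ((ystar m0 i2).toNat) ((ystar m0 i2).toNat) with hc1def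
      set c2 : ℕ := Nat.descFactorial ((ystar m i2).toNat) ((y i2).toNat) with hc2def
      set cq : ℕ := Nat.descFactorial ((ystar m i2).toNat) ((ystar m i2).toNat) with hcqdef
      have hcq : 0 < cq := descF_pos le_rfl
      have hmain := ratio_zero3 (c1 : ℝ) (c2 : ℝ) (cq : ℝ) (by positivity) hlt
        (1 + A0) (1 + Q) (1 + Q)
      refine Tendsto.congr' ?_ hmain
      filter_upwards [eventually_ge_atTop p2] with n hn
      rw [intensity_seq_self hne (ystar m0) (hsrc m0 hm01 hm0M i1) n,
        intensity_seq hne y (ystar m) (hy0 i1) (hsrc m h1 h2 i1) hz n hn,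
        intensity_seq_self hne (ystar m) (hsrc m h1 h2 i1) n]
      have hKe0 : n + 1 + (ystar m0 i1).toNat = n + (1 + A0) := by omega
      have hKe : n + 1 + (ystar m i1).toNat = n + (1 + Q) := by omega
      rw [hKe0, hKe]
      push_cast
      ring
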